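/- The quotient V_{D,d}/V_{D,d+1} is spanned by the images of the expansions B_S where D is a dessin with exactly d edges and S is the set of all edges of D; in particular, if there are only finitely many isomorphism classes of dessins with exactly d edges, this quotient is finite dimensional. -/

import Mathlib

set_option linter.unusedVariables false
open scoped Classical

/-- The combinatorial data of a dessin d'enfants on vertex type `V` and edge type `E`:
each edge has a black end and a white end (so every edge joins the black class `V₀`
to the white class `V₁`, where the classes are given by the two-coloring `color`),
together with a cyclic ordering of the edges incident at each vertex, encoded as a
strict cyclic betweenness relation `sbtw v a b c` on the edges incident to `v`. -/
structure PreDessin (V E : Type) : Type where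
  blackEnd : E → V
  whiteEnd : E → V
  color : V → Bool
  color_black : ∀ e, color (blackEnd e) = false
  color_white : ∀ e, color (whiteEnd e) = true
  sbtw : V → E → E → E → Prop
  sbtw_incident : ∀ v a b c, sbtw v a b c →
      (blackEnd a = v ∨ whiteEnd a = v) ∧ (blackEnd b = v ∨ whiteEnd b = v) ∧
        (blackEnd c = v ∨ whiteEnd c = v)
  sbtw_cyclic : ∀ v a b c, sbtw v a b c → sbtw v b c a
  sbtw_asymm : ∀ v a b c, sbtw v a b c → ¬ sbtw v c b a
  sbtw_trans : ∀ v a b c d, sbtw v a b c → sbtw v a c d → sbtw v a b d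
  sbtw_total : ∀ v a b c,
      (blackEnd a = v ∨ whiteEnd a = v) → (blackEnd b = v ∨ whiteEnd b = v) →
      (blackEnd c = v ∨ whiteEnd c = v) → a ≠ b → b ≠ c → a ≠ c →
      sbtw v a b c ∨ sbtw v c b a

/-- A dessin d'enfants: a finite vertex set, a finite edge set, and the dessin data. -/
structure Dessin : Type 1 where
  V : Type
  E : Type
  fintV : Fintype V
  fintE : Fintype E
  str : PreDessin V E

instance (D : Dessin) : Fintype D.V := D.fintV
instance (D : Dessin) : Fintype D.E := D.fintE

/-- Deletion of a set `T` of edges from a dessin: the remaining edges keep their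
endpoints and colors, and the cyclic ordering at each vertex is the induced
(restricted) one. -/
noncomputable def Dessin.delete (D : Dessin) (T : Set D.E) : Dessin where
  V := D.V
  E := {e : D.E // e ∉ T}
  fintV := D.fintV
  fintE := Subtype.fintype _
  str :=
    { blackEnd := fun e => D.str.blackEnd e.1
      whiteEnd := fun e => D.str.whiteEnd e.1
      color := D.str.color
      color_black := fun e => D.str.color_black e.1
      color_white := fun e => D.str.color_white e.1
      sbtw := fun v a b c => D.str.sbtw v a.1 b.1 c.1
      sbtw_incident := fun v a b c h => D.str.sbtw_incident v _ _ _ h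
      sbtw_cyclic := fun v a b c h => D.str.sbtw_cyclic v _ _ _ h
      sbtw_asymm := fun v a b c h => D.str.sbtw_asymm v _ _ _ h
      sbtw_trans := fun v a b c d h1 h2 => D.str.sbtw_trans v _ _ _ _ h1 h2
      sbtw_total := fun v a b c ha hb hc hab hbc hac =>
        D.str.sbtw_total v a.1 b.1 c.1 ha hb hc
          (fun h => hab (Subtype.ext h)) (fun h => hbc (Subtype.ext h))
          (fun h => hac (Subtype.ext h)) }

/-- Isomorphism of dessins: bijections of vertices and edges preserving endpoints,
colors and the cyclic orderings. -/
def DessinRel (D1 D2 : Dessin) : Prop :=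
  ∃ (eV : D1.V ≃ D2.V) (eE : D1.E ≃ D2.E),
    (∀ e, D2.str.blackEnd (eE e) = eV (D1.str.blackEnd e)) ∧
    (∀ e, D2.str.whiteEnd (eE e) = eV (D1.str.whiteEnd e)) ∧
    (∀ v, D2.str.color (eV v) = D1.str.color v) ∧
    (∀ v a b c, D2.str.sbtw (eV v) (eE a) (eE b) (eE c) ↔ D1.str.sbtw v a b c)

/-- Isomorphism classes of dessins d'enfants. -/
def DessinIso : Type 1 := Quot DessinRel

/-- The isomorphism class of a dessin. -/
def Dessin.cl (D : Dessin) : DessinIso := Quot.mk _ D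

/-- The Vassiliev space: the free complex vector space on isomorphism classes of dessins. -/
abbrev Vs : Type 1 := DessinIso →₀ ℂ

/-- The expansion `B_S = ∑_{T ⊆ S} (-1)^{|T|} [D \ T]` of a dessin `D` with
optional edge set `S`. -/
noncomputable def expandE (D : Dessin) (S : Finset D.E) : Vs :=
  ∑ T ∈ S.powerset, ((-1 : ℂ) ^ T.card) • Finsupp.single (D.delete (↑T : Set D.E)).cl 1

/-- The dessin filtration: `Vd d` is the span of all expansions of dessins with `d`
optional edges. -/
noncomputable def Vd (d : ℕ) : Submodule ℂ Vs :=
  Submodule.span ℂ {x | ∃ (D : Dessin) (S : Finset D.E), S.card = d ∧ x = expandE D S}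

section Aux

lemma cl_congr {D1 D2 : Dessin} (h : DessinRel D1 D2) : D1.cl = D2.cl := Quot.sound h

/-- Deleting `T` then `U` is the same as deleting `T ∪ U` (up to isomorphism). -/
noncomputable def deleteDeleteEquiv (D : Dessin) (T : Set D.E) (U : Set (D.delete T).E) :
    ((D.delete T).delete U).E ≃ (D.delete (T ∪ Subtype.val '' U)).E where
  toFun f := ⟨f.1.1, by
    rintro (h | ⟨g, hg, hgeq⟩)
    · exact f.1.2 h
    · exact f.2 (by rwa [show g = f.1 from Subtype.ext hgeq] at hg)⟩
  invFun g := ⟨⟨g.1, fun h => g.2 (Or.inl h)⟩, fun h => g.2 (Or.inr ⟨_, h, rfl⟩)⟩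
  left_inv _ := rfl
  right_inv _ := rfl

lemma delete_delete_cl (D : Dessin) (T : Set D.E) (U : Set (D.delete T).E) :
    ((D.delete T).delete U).cl = (D.delete (T ∪ Subtype.val '' U)).cl := by
  exact cl_congr ⟨Equiv.refl _, deleteDeleteEquiv D T U,
    fun e => rfl, fun e => rfl, fun v => rfl, fun v a b c => Iff.rfl⟩

/-- Isomorphic dessins have isomorphic deletions. -/
lemma dessinRel_delete {D1 D2 : Dessin} (eV : D1.V ≃ D2.V) (eE : D1.E ≃ D2.E)
    (hb : ∀ e, D2.str.blackEnd (eE e) = eV (D1.str.blackEnd e))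
    (hw : ∀ e, D2.str.whiteEnd (eE e) = eV (D1.str.whiteEnd e))
    (hc : ∀ v, D2.str.color (eV v) = D1.str.color v)
    (hs : ∀ v a b c, D2.str.sbtw (eV v) (eE a) (eE b) (eE c) ↔ D1.str.sbtw v a b c)
    (T : Set D1.E) :
    DessinRel (D1.delete T) (D2.delete (⇑eE '' T)) := by
  refine ⟨eV, Equiv.subtypeEquiv eE (fun a => not_congr
    ⟨fun ha => ⟨a, ha, rfl⟩, fun ⟨b, hb', hba⟩ => by rwa [← eE.injective hba]⟩),
    fun e => hb e.1, fun e => hw e.1, hc, fun v a b c => hs v a.1 b.1 c.1⟩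

lemma expandE_univ_congr {D1 D2 : Dessin} (eV : D1.V ≃ D2.V) (eE : D1.E ≃ D2.E)
    (hb : ∀ e, D2.str.blackEnd (eE e) = eV (D1.str.blackEnd e))
    (hw : ∀ e, D2.str.whiteEnd (eE e) = eV (D1.str.whiteEnd e))
    (hc : ∀ v, D2.str.color (eV v) = D1.str.color v)
    (hs : ∀ v a b c, D2.str.sbtw (eV v) (eE a) (eE b) (eE c) ↔ D1.str.sbtw v a b c) :
    expandE D1 Finset.univ = expandE D2 Finset.univ := by
  unfold expandE
  refine Finset.sum_nbij' (fun T => T.map eE.toEmbedding)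
    (fun T => T.map eE.symm.toEmbedding) ?_ ?_ ?_ ?_ ?_
  · intro T _; simp [Finset.mem_powerset]
  · intro T _; simp [Finset.mem_powerset]
  · intro T _; ext x; simp
  · intro T _; ext x; simp
  · intro T _
    rw [Finset.card_map]
    have h := cl_congr (dessinRel_delete eV eE hb hw hc hs (↑T : Set D1.E))
    have himg : ⇑eE '' (↑T : Set D1.E) = ↑(T.map eE.toEmbedding) := by
      simp [Finset.coe_map]
    rw [himg] at h
    rw [h]

lemma card_subtype_eq {D : Dessin} (S : Finset D.E) (e : D.E) (he : e ∉ S) :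
    (S.subtype (fun f => f ∉ ({e} : Set D.E))).card = S.card := by
  rw [Finset.card_subtype, Finset.filter_true_of_mem]
  intro x hx
  simp only [Set.mem_singleton_iff]
  rintro rfl; exact he hx

/-- The key deletion identity : `B_{S ∪ {e}} = B_S - B_S(D \ e)`. -/
lemma expandE_insert (D : Dessin) (S : Finset D.E) (e : D.E) (he : e ∉ S) :
    expandE D (insert e S)
      = expandE D S
        - expandE (D.delete ({e} : Set D.E)) (S.subtype (fun f => f ∉ ({e} : Set D.E))) := by
  unfold expandE
  rw [Finset.sum_powerset_insert he, sub_eq_add_neg]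
  congr 1
  rw [← Finset.sum_neg_distrib]
  refine Finset.sum_nbij' (fun T => T.subtype (fun f => f ∉ ({e} : Set D.E)))
    (fun T => T.map (Function.Embedding.subtype _)) ?_ ?_ ?_ ?_ ?_
  · intro T hT
    rw [Finset.mem_powerset] at hT
    refine Finset.mem_powerset.mpr ?_
    intro x hx
    exact Finset.mem_subtype.mpr (hT (Finset.mem_subtype.mp hx))
  · intro T hT
    replace hT := Finset.mem_powerset.mp hT
    refine Finset.mem_powerset.mpr ?_
    intro x hx
    replace hx := Finset.mem_map.mp hx
    obtain ⟨y, hy, rfl⟩ := hx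
    have := hT hy
    exact Finset.mem_subtype.mp this
  · intro T hT
    rw [Finset.mem_powerset] at hT
    ext x
    constructor
    · intro hx
      obtain ⟨y, hy, rfl⟩ := Finset.mem_map.mp hx
      exact Finset.mem_subtype.mp hy
    · intro hx
      refine Finset.mem_map.mpr ⟨⟨x, ?_⟩, Finset.mem_subtype.mpr hx, rfl⟩
      simp only [Set.mem_singleton_iff]
      rintro rfl; exact he (hT hx)
  · intro T hT
    ext x
    constructor
    · intro h
      obtain ⟨y, hy, hyx⟩ := Finset.mem_map.mp (Finset.mem_subtype.mp h)
      exact (Subtype.ext hyx : y = x) ▸ hy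
    · intro hx
      exact Finset.mem_subtype.mpr (Finset.mem_map.mpr ⟨x, hx, rfl⟩)
  · intro T hT
    rw [Finset.mem_powerset] at hT
    have hcard : (T.subtype (fun f => f ∉ ({e} : Set D.E))).card = T.card :=
      card_subtype_eq T e (fun h => he (hT h))
    have hset : ({e} : Set D.E) ∪ Subtype.val ''
          (↑(show Finset (D.delete ({e} : Set D.E)).E from
              T.subtype (fun f => f ∉ ({e} : Set D.E))) : Set (D.delete ({e} : Set D.E)).E)
        = (↑(insert e T) : Set D.E) := by
      ext x
      simp only [Set.mem_union, Set.mem_singleton_iff, Set.mem_image, Finset.mem_coe,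
        Finset.mem_subtype, Finset.coe_insert, Set.mem_insert_iff]
      constructor
      · rintro (rfl | ⟨g, hg, rfl⟩)
        · exact Or.inl rfl
        · exact Or.inr (Finset.mem_subtype.mp hg)
      · rintro (rfl | hx)
        · exact Or.inl rfl
        · refine Or.inr ⟨⟨x, ?_⟩, Finset.mem_subtype.mpr hx, rfl⟩
          simp only [Set.mem_singleton_iff]
          rintro rfl; exact he (hT hx)
    rw [delete_delete_cl, hset]
    erw [hcard]
    rw [Finset.card_insert_of_notMem (fun h => he (hT h)),
      pow_succ, mul_smul, neg_one_smul, smul_neg]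

lemma expandE_mem_Vd (D : Dessin) (S : Finset D.E) (d : ℕ) (hS : S.card = d) :
    expandE D S ∈ Vd d :=
  Submodule.subset_span ⟨D, S, hS, rfl⟩

lemma card_delete_singleton (D : Dessin) (e : D.E) :
    Fintype.card (D.delete ({e} : Set D.E)).E + 1 = Fintype.card D.E := by
  classical
  have : Fintype.card (D.delete ({e} : Set D.E)).E
      = Fintype.card {f : D.E // f ≠ e} := by
    apply Fintype.card_congr
    exact Equiv.subtypeEquivRight (fun x => by simp [Set.mem_singleton_iff])
  rw [this]
  have h2 : Fintype.card {f : D.E // f ≠ e} = Fintype.card D.E - 1 := by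
    simp [Fintype.card_subtype_compl, Fintype.card_subtype_eq]
  rw [h2]
  have : 1 ≤ Fintype.card D.E := Fintype.card_pos_iff.mpr ⟨e⟩
  omega

lemma Vd_succ_le (d : ℕ) : Vd (d + 1) ≤ Vd d := by
  rw [Vd, Submodule.span_le]
  rintro x ⟨D, S, hS, rfl⟩
  have hne : S.Nonempty := Finset.card_pos.mp (by omega)
  obtain ⟨e, he⟩ := hne
  have he' : e ∉ S.erase e := Finset.notMem_erase e S
  have hins : insert e (S.erase e) = S := Finset.insert_erase he
  have hkey := expandE_insert D (S.erase e) e he'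
  rw [hins] at hkey
  rw [hkey]
  have hc : (S.erase e).card = d := by
    rw [Finset.card_erase_of_mem he, hS]
    omega
  exact sub_mem (expandE_mem_Vd _ _ _ hc)
    (expandE_mem_Vd _ _ _ ((card_subtype_eq _ _ he').trans hc))

lemma aux_mem (d : ℕ) (n : ℕ) : ∀ (D : Dessin) (S : Finset D.E),
    Fintype.card D.E ≤ n → S.card = d →
    expandE D S ∈ Vd (d + 1) ⊔
      Submodule.span ℂ
        {x : Vs | ∃ D : Dessin, Fintype.card D.E = d ∧ x = expandE D Finset.univ} := by
  induction n with
  | zero =>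
    intro D S hn hS
    have hempty : IsEmpty D.E := Fintype.card_eq_zero_iff.mp (by omega)
    have hU : S = Finset.univ := Finset.eq_univ_of_forall (fun x => (hempty.false x).elim)
    refine le_sup_right (α := Submodule ℂ Vs) ?_
    exact Submodule.subset_span ⟨D, by rw [← hS, hU, Finset.card_univ], by rw [hU]⟩
  | succ n ih =>
    intro D S hn hS
    by_cases hU : S = Finset.univ
    · refine le_sup_right (α := Submodule ℂ Vs) ?_
      exact Submodule.subset_span ⟨D, by rw [← hS, hU, Finset.card_univ], by rw [hU]⟩
    · have : ∃ e, e ∉ S := by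
        by_contra h
        push_neg at h
        exact hU (Finset.eq_univ_of_forall h)
      obtain ⟨e, he⟩ := this
      have hkey := expandE_insert D S e he
      have : expandE D S = expandE D (insert e S)
          + expandE (D.delete ({e} : Set D.E)) (S.subtype (fun f => f ∉ ({e} : Set D.E))) := by
        rw [hkey]; abel
      rw [this]
      refine add_mem (le_sup_left (α := Submodule ℂ Vs) ?_) ?_
      · exact expandE_mem_Vd _ _ _ (by rw [Finset.card_insert_of_notMem he, hS])
      · refine ih _ _ ?_ ((card_subtype_eq _ _ he).trans hS)
        have := card_delete_singleton D e
        omega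

/-- `B_univ` as a function on isomorphism classes. -/
noncomputable def fullExpand (d : ℕ) : DessinIso → Vs :=
  Quot.lift (fun D => if Fintype.card D.E = d then expandE D Finset.univ else 0)
    (by
      rintro D1 D2 ⟨eV, eE, hb, hw, hc, hs⟩
      have hcard : Fintype.card D1.E = Fintype.card D2.E := Fintype.card_congr eE
      by_cases h : Fintype.card D1.E = d
      · rw [if_pos h, if_pos (by omega), expandE_univ_congr eV eE hb hw hc hs]
      · rw [if_neg h, if_neg (by omega)])

end Aux

/-- `V_{D,d}/V_{D,d+1}` is spanned by the images of the expansions `B_S`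
where `D` has exactly `d` edges and `S` is the set of all edges of `D` (expressed as
`V_{D,d} = V_{D,d+1} ⊔ span {B_univ}`); in particular, if there are only finitely many
isomorphism classes of dessins with exactly `d` edges, this quotient (realized as the
image of `V_{D,d}` in `V/V_{D,d+1}`) is finite dimensional. -/
theorem Vd_quotient_spanned (d : ℕ) :
    Vd d = Vd (d + 1) ⊔
        Submodule.span ℂ
          {x : Vs | ∃ D : Dessin, Fintype.card D.E = d ∧ x = expandE D Finset.univ} ∧
    ({c : DessinIso | ∃ D : Dessin, D.cl = c ∧ Fintype.card D.E = d}.Finite →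
      FiniteDimensional ℂ ↥((Vd d).map (Vd (d + 1)).mkQ)) := by
  have part1 : Vd d = Vd (d + 1) ⊔
      Submodule.span ℂ
        {x : Vs | ∃ D : Dessin, Fintype.card D.E = d ∧ x = expandE D Finset.univ} := by
    apply le_antisymm
    · rw [Vd, Submodule.span_le]
      rintro x ⟨D, S, hS, rfl⟩
      exact aux_mem d (Fintype.card D.E) D S le_rfl hS
    · refine sup_le (Vd_succ_le d) ?_
      rw [Submodule.span_le]
      rintro x ⟨D, hD, rfl⟩
      exact expandE_mem_Vd D Finset.univ d (by rw [Finset.card_univ, hD])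
  refine ⟨part1, fun hfin => ?_⟩
  set X := {x : Vs | ∃ D : Dessin, Fintype.card D.E = d ∧ x = expandE D Finset.univ} with hX
  have hXfin : X.Finite := by
    refine Set.Finite.subset (hfin.image (fullExpand d)) ?_
    rintro x ⟨D, hD, rfl⟩
    exact ⟨D.cl, ⟨D, rfl, hD⟩, by simp [fullExpand, Dessin.cl, hD]⟩
  have hmap : (Vd d).map (Vd (d + 1)).mkQ
      = Submodule.span ℂ ((Vd (d + 1)).mkQ '' X) := by
    rw [part1, Submodule.map_sup, Submodule.map_span]
    have hbot : (Vd (d + 1)).map (Vd (d + 1)).mkQ = ⊥ := by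
      rw [Submodule.eq_bot_iff]
      intro x hx
      obtain ⟨y, hy, rfl⟩ := Submodule.mem_map.mp hx
      rwa [Submodule.mkQ_apply, Submodule.Quotient.mk_eq_zero]
    rw [hbot, bot_sup_eq]
  rw [hmap]
  exact FiniteDimensional.span_of_finite ℂ (hXfin.image _)
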